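/- Let Γ be a weighted congestion game fulfilling Conditions 1–2 with Σ_u = Σ_{u'} for all players u, u', let Γ̂ be its Ψ̂-game, and let ε ∈ (0,1). Suppose the profile S^(t) is not a 1/(1−ε)-approximate pure Nash equilibrium of Γ̂ and S^(t+1) is obtained from S^(t) by an Algorithm 1 step with chosen player u_t. Then for every player u ∈ 𝒩, ĉ_{u_t}(S^(t)) − ĉ_{u_t}(S^(t+1)) ≥ (ε/(W + d!·W^{d+1}))·ĉ_u(S^(t)); consequently Φ̂(S^(t)) − Φ̂(S^(t+1)) ≥ (ε/(N·(W + d!·W^{d+1})))·Φ̂(S^(t)). -/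

import Mathlib

/-- `hpoly k l` is the complete homogeneous symmetric polynomial of degree `k`
evaluated at the entries of the list `l`, i.e. the sum of all monomials of
total degree `k` in the elements of `l`. -/
noncomputable def hpoly : ℕ → List ℝ → ℝ
  | 0, _ => 1
  | _ + 1, [] => 0
  | k + 1, a :: l => a * hpoly k (a :: l) + hpoly (k + 1) l
termination_by k l => (k, l.length)

/-- The `k`-order `Ψ̂`-function of a multiset `M` of reals:
`Ψ̂_k(M) = k! ·` (sum of all monomials of total degree `k` in the elements of `M`).
In particular `Ψ̂_0(M) = 1` and `Ψ̂_k(∅) = 0` for `k ≥ 1`. -/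
noncomputable def psiHat (k : ℕ) (M : Multiset ℝ) : ℝ :=
  (Nat.factorial k : ℝ) * hpoly k M.toList

lemma hpoly_zero (l : List ℝ) : hpoly 0 l = 1 := by simp [hpoly]
lemma hpoly_nil (k : ℕ) : hpoly (k+1) [] = 0 := by simp [hpoly]
lemma hpoly_cons (k : ℕ) (a : ℝ) (l : List ℝ) :
    hpoly (k+1) (a::l) = a * hpoly k (a :: l) + hpoly (k + 1) l := by rw [hpoly]

lemma nonneg_cons {a : ℝ} {l : List ℝ} (ha : 0 ≤ a) (hl : ∀ x ∈ l, 0 ≤ x) :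
    ∀ x ∈ a :: l, 0 ≤ x := by
  intro x hx
  rcases List.mem_cons.1 hx with rfl | h
  · exact ha
  · exact hl x h

lemma hpoly_nonneg : ∀ (k : ℕ) (l : List ℝ), (∀ x ∈ l, 0 ≤ x) → 0 ≤ hpoly k l
  | 0, l, _ => by simp [hpoly_zero]
  | k + 1, [], _ => by simp [hpoly_nil]
  | k + 1, a :: l, h => by
      have ha : 0 ≤ a := h a (by simp)
      have hl : ∀ x ∈ l, 0 ≤ x := fun x hx => h x (by simp [hx])
      have h1 := hpoly_nonneg k (a :: l) h
      have h2 := hpoly_nonneg (k+1) l hl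
      rw [hpoly_cons]; positivity
termination_by k l => (k, l.length)

lemma hpoly_le_cons (k : ℕ) (a : ℝ) (l : List ℝ) (ha : 0 ≤ a) (hl : ∀ x ∈ l, 0 ≤ x) :
    hpoly k l ≤ hpoly k (a :: l) := by
  cases k with
  | zero => simp [hpoly_zero]
  | succ k =>
      rw [hpoly_cons]
      have h1 := hpoly_nonneg k (a :: l) (nonneg_cons ha hl)
      nlinarith

lemma hpoly_mono_deg (k : ℕ) (b : ℝ) (l : List ℝ) (hb : 1 ≤ b) (hl : ∀ x ∈ l, 0 ≤ x) :
    hpoly k (b :: l) ≤ hpoly (k+1) (b :: l) := by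
  rw [hpoly_cons]
  have h1 := hpoly_nonneg k (b :: l) (nonneg_cons (by linarith) hl)
  have h2 := hpoly_nonneg (k+1) l hl
  nlinarith

lemma hpoly_succ_le_sum_mul : ∀ (k : ℕ) (l : List ℝ), (∀ x ∈ l, 0 ≤ x) →
    hpoly (k+1) l ≤ l.sum * hpoly k l
  | _, [], _ => by simp [hpoly_nil]
  | k, a :: l, h => by
      have ha : 0 ≤ a := h a (by simp)
      have hl : ∀ x ∈ l, 0 ≤ x := fun x hx => h x (by simp [hx])
      have ih := hpoly_succ_le_sum_mul k l hl
      have hmon := hpoly_le_cons k a l ha hl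
      have hls : 0 ≤ l.sum := List.sum_nonneg hl
      have h1 := hpoly_nonneg k l hl
      rw [hpoly_cons, List.sum_cons]
      nlinarith
termination_by k l => l.length

lemma hpoly_swap : ∀ (k : ℕ) (a b : ℝ) (l : List ℝ),
    hpoly k (a :: b :: l) = hpoly k (b :: a :: l) := by
  intro k
  induction k using Nat.strong_induction_on with
  | _ k ih =>
    intro a b l
    match k with
    | 0 => simp [hpoly_zero]
    | 1 =>
        rw [hpoly_cons, hpoly_cons, hpoly_cons, hpoly_cons]
        simp [hpoly_zero]; ring
    | (m+1)+1 =>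
        have ihk := ih (m+1) (by omega)
        have ihm := ih m (by omega)
        have e1 : hpoly (m+1) (a::b::l) = a * hpoly m (a::b::l) + hpoly (m+1) (b::l) :=
          hpoly_cons m a (b::l)
        have e2 : hpoly (m+1) (b::a::l) = b * hpoly m (a::b::l) + hpoly (m+1) (a::l) := by
          rw [hpoly_cons, ihm a b l]
        have e6 : a * hpoly m (a::b::l) + hpoly (m+1) (b::l)
            = b * hpoly m (a::b::l) + hpoly (m+1) (a::l) := by
          rw [← e1, ← e2]; exact ihk a b l
        rw [hpoly_cons (m+1) a (b::l), hpoly_cons (m+1) b (a::l),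
          hpoly_cons (m+1) b l, hpoly_cons (m+1) a l, e1, e2]
        linear_combination (a+b) * e6

lemma hpoly_perm {l l' : List ℝ} (h : l.Perm l') : ∀ k, hpoly k l = hpoly k l' := by
  induction h with
  | nil => intro k; rfl
  | cons a h ih =>
      intro k
      induction k with
      | zero => simp [hpoly_zero]
      | succ k ihk => rw [hpoly_cons, hpoly_cons, ihk, ih (k+1)]
  | swap a b l => intro k; exact hpoly_swap k b a l
  | trans h1 h2 ih1 ih2 => intro k; rw [ih1 k, ih2 k]

lemma hpoly_two_cons_le (Wc : ℝ) (hW : 1 ≤ Wc) :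
    ∀ (k : ℕ) (a b : ℝ) (l : List ℝ), 0 ≤ a → a ≤ Wc → 1 ≤ b → (∀ x ∈ l, 0 ≤ x) →
    hpoly k (a :: b :: l) ≤ (1 + k * Wc ^ k) * hpoly k (b :: l) := by
  intro k
  induction k with
  | zero => intro a b l _ _ _ _; simp [hpoly_zero]
  | succ k ih =>
      intro a b l ha haW hb hl
      have hbl : ∀ x ∈ b :: l, 0 ≤ x := nonneg_cons (by linarith) hl
      have h1 : hpoly k (a :: b :: l) ≤ (1 + k * Wc ^ k) * hpoly k (b :: l) :=
        ih a b l ha haW hb hl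
      have h2 : hpoly k (b :: l) ≤ hpoly (k+1) (b :: l) := hpoly_mono_deg k b l hb hl
      have h3 : 0 ≤ hpoly k (b :: l) := hpoly_nonneg k _ hbl
      have h4 : 0 ≤ hpoly (k+1) (b :: l) := hpoly_nonneg (k+1) _ hbl
      have hWk : (1:ℝ) ≤ Wc ^ k := one_le_pow₀ hW
      have hWk1 : Wc ≤ Wc ^ (k+1) := by
        calc Wc = Wc * 1 := by ring
        _ ≤ Wc * Wc ^ k := by nlinarith
        _ = Wc ^ (k+1) := by ring
      rw [hpoly_cons]
      have key : a * hpoly k (a :: b :: l) ≤ Wc * ((1 + k * Wc ^ k) * hpoly k (b :: l)) := by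
        have h0 : 0 ≤ hpoly k (a :: b :: l) := hpoly_nonneg k _ (nonneg_cons ha hbl)
        have := mul_le_mul haW h1 h0 (by linarith)
        linarith
      have key2 : Wc * ((1 + k * Wc ^ k) * hpoly k (b :: l)) ≤
          (Wc + k * Wc ^ (k+1)) * hpoly (k+1) (b :: l) := by
        have e : Wc * ((1 + k * Wc ^ k) * hpoly k (b :: l))
            = (Wc + k * Wc ^ (k+1)) * hpoly k (b :: l) := by ring
        rw [e]
        have hc : (0:ℝ) ≤ Wc + k * Wc ^ (k+1) := by positivity
        exact mul_le_mul_of_nonneg_left h2 hc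
      have final : Wc + k * Wc ^ (k+1) + 1 ≤ 1 + (k+1) * Wc ^ (k+1) := by
        push_cast; nlinarith
      calc a * hpoly k (a :: b :: l) + hpoly (k+1) (b :: l)
          ≤ (Wc + k * Wc ^ (k+1)) * hpoly (k+1) (b :: l) + 1 * hpoly (k+1) (b :: l) := by
            have := key.trans key2; linarith
        _ = (Wc + k * Wc ^ (k+1) + 1) * hpoly (k+1) (b :: l) := by ring
        _ ≤ (1 + ((k:ℝ)+1) * Wc ^ (k+1)) * hpoly (k+1) (b :: l) :=
            mul_le_mul_of_nonneg_right final h4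
        _ = (1 + ((k:ℕ)+1 : ℕ) * Wc ^ (k+1)) * hpoly (k+1) (b :: l) := by push_cast; ring

lemma toList_cons_perm (a : ℝ) (M : Multiset ℝ) :
    ((a ::ₘ M).toList).Perm (a :: M.toList) := by
  rw [← Multiset.coe_eq_coe]
  rw [Multiset.coe_toList, ← Multiset.cons_coe, Multiset.coe_toList]

lemma psiHat_cons_eq (k : ℕ) (a : ℝ) (M : Multiset ℝ) :
    psiHat k (a ::ₘ M) = (Nat.factorial k : ℝ) * hpoly k (a :: M.toList) := by
  unfold psiHat
  rw [hpoly_perm (toList_cons_perm a M) k]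

lemma psiHat_cons2_eq (k : ℕ) (a b : ℝ) (M : Multiset ℝ) :
    psiHat k (a ::ₘ b ::ₘ M) = (Nat.factorial k : ℝ) * hpoly k (a :: b :: M.toList) := by
  unfold psiHat
  have p : ((a ::ₘ b ::ₘ M).toList).Perm (a :: b :: M.toList) := by
    rw [← Multiset.coe_eq_coe]
    rw [Multiset.coe_toList, ← Multiset.cons_coe, ← Multiset.cons_coe, Multiset.coe_toList]
  rw [hpoly_perm p k]

lemma psiHat_zero (M : Multiset ℝ) : psiHat 0 M = 1 := by
  simp [psiHat, hpoly_zero]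

lemma mem_toList_nonneg {M : Multiset ℝ} (h : ∀ x ∈ M, 0 ≤ x) :
    ∀ x ∈ M.toList, 0 ≤ x := by
  intro x hx; exact h x (by rwa [← Multiset.mem_toList])

lemma psiHat_nonneg (k : ℕ) {M : Multiset ℝ} (h : ∀ x ∈ M, 0 ≤ x) : 0 ≤ psiHat k M := by
  unfold psiHat
  have := hpoly_nonneg k M.toList (mem_toList_nonneg h)
  positivity

lemma psiHat_le_cons (k : ℕ) {a : ℝ} {M : Multiset ℝ} (ha : 0 ≤ a) (h : ∀ x ∈ M, 0 ≤ x) :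
    psiHat k M ≤ psiHat k (a ::ₘ M) := by
  rw [psiHat_cons_eq]
  unfold psiHat
  have := hpoly_le_cons k a M.toList ha (mem_toList_nonneg h)
  have hf : (0:ℝ) ≤ (Nat.factorial k : ℝ) := by positivity
  exact mul_le_mul_of_nonneg_left this hf

lemma psiHat_mono (k : ℕ) {M M' : Multiset ℝ} (hle : M ≤ M') (h' : ∀ x ∈ M', 0 ≤ x) :
    psiHat k M ≤ psiHat k M' := by
  obtain ⟨C, rfl⟩ := Multiset.le_iff_exists_add.1 hle
  have hM : ∀ x ∈ M, 0 ≤ x := fun x hx => h' x (Multiset.mem_add.2 (Or.inl hx))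
  have hC : ∀ x ∈ C, 0 ≤ x := fun x hx => h' x (Multiset.mem_add.2 (Or.inr hx))
  clear hle h'
  induction C using Multiset.induction_on with
  | empty => simp
  | cons a C ih =>
      have ha : 0 ≤ a := hC a (by simp)
      have hC' : ∀ x ∈ C, 0 ≤ x := fun x hx => hC x (by simp [hx])
      have hMC : ∀ x ∈ M + C, 0 ≤ x := by
        intro x hx; rcases Multiset.mem_add.1 hx with h | h
        · exact hM x h
        · exact hC' x h
      calc psiHat k M ≤ psiHat k (M + C) := ih hC'
        _ ≤ psiHat k (a ::ₘ (M + C)) := psiHat_le_cons k ha hMC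
        _ = psiHat k (M + a ::ₘ C) := by rw [Multiset.add_cons]

lemma psiHat_cons_rec (k : ℕ) (a : ℝ) (M : Multiset ℝ) :
    psiHat (k+1) (a ::ₘ M) = ((k:ℝ)+1) * a * psiHat k (a ::ₘ M) + psiHat (k+1) M := by
  rw [psiHat_cons_eq, psiHat_cons_eq]
  unfold psiHat
  rw [hpoly_cons, Nat.factorial_succ]
  push_cast
  ring

lemma psiHat_succ_le (k : ℕ) {M : Multiset ℝ} (h : ∀ x ∈ M, 0 ≤ x) :
    psiHat (k+1) M ≤ ((k:ℝ)+1) * M.sum * psiHat k M := by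
  unfold psiHat
  have h1 := hpoly_succ_le_sum_mul k M.toList (mem_toList_nonneg h)
  have h2 : M.toList.sum = M.sum := Multiset.sum_toList M
  rw [Nat.factorial_succ]
  push_cast
  rw [← h2]
  have hf : (0:ℝ) ≤ (Nat.factorial k : ℝ) := by positivity
  nlinarith [mul_le_mul_of_nonneg_left h1 hf]

lemma psiHat_two_cons_le (Wc : ℝ) (hW : 1 ≤ Wc) (d k : ℕ) (hk : k ≤ d)
    {a b : ℝ} {M : Multiset ℝ} (ha : 0 ≤ a) (haW : a ≤ Wc) (hb : 1 ≤ b)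
    (hM : ∀ x ∈ M, 0 ≤ x) :
    psiHat k (a ::ₘ b ::ₘ M) ≤ (1 + (Nat.factorial d : ℝ) * Wc ^ d) * psiHat k (b ::ₘ M) := by
  rw [psiHat_cons2_eq, psiHat_cons_eq]
  have h1 := hpoly_two_cons_le Wc hW k a b M.toList ha haW hb (mem_toList_nonneg hM)
  have hnn : 0 ≤ hpoly k (b :: M.toList) :=
    hpoly_nonneg k _ (nonneg_cons (by linarith) (mem_toList_nonneg hM))
  have hfac : (1:ℝ) + k * Wc ^ k ≤ 1 + (Nat.factorial d : ℝ) * Wc ^ d := by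
    have e1 : (k:ℝ) ≤ (Nat.factorial d : ℝ) := by
      exact_mod_cast le_trans hk (Nat.self_le_factorial d)
    have e2 : Wc ^ k ≤ Wc ^ d := pow_le_pow_right₀ hW hk
    have e3 : (0:ℝ) ≤ Wc ^ k := by positivity
    have e4 : (0:ℝ) ≤ (k:ℝ) := by positivity
    nlinarith
  have hf : (0:ℝ) ≤ (Nat.factorial k : ℝ) := by positivity
  calc (Nat.factorial k : ℝ) * hpoly k (a :: b :: M.toList)
      ≤ (Nat.factorial k : ℝ) * ((1 + k * Wc ^ k) * hpoly k (b :: M.toList)) :=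
        mul_le_mul_of_nonneg_left h1 hf
    _ ≤ (Nat.factorial k : ℝ) * ((1 + (Nat.factorial d : ℝ) * Wc ^ d) * hpoly k (b :: M.toList)) := by
        have := mul_le_mul_of_nonneg_right hfac hnn
        exact mul_le_mul_of_nonneg_left this hf
    _ = (1 + (Nat.factorial d : ℝ) * Wc ^ d) * ((Nat.factorial k : ℝ) * hpoly k (b :: M.toList)) := by ring

lemma nonneg_cons' {a : ℝ} {M : Multiset ℝ} (ha : 0 ≤ a) (hM : ∀ x ∈ M, 0 ≤ x) :
    ∀ x ∈ a ::ₘ M, 0 ≤ x := by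
  intro x hx
  rcases Multiset.mem_cons.1 hx with rfl | h
  · exact ha
  · exact hM x h


/-- A weighted congestion game with `N` players, `E` resources, polynomial latency
functions of degree at most `d` (Condition 2, with coefficient-ratio bound `A`),
and players' weights in `[1, W]` (Condition 1). -/
structure WCGame (N E d : ℕ) (W A : ℝ) where
  /-- the strategy set of each player: a set of nonempty subsets of resources -/
  strat : Fin N → Set (Finset (Fin E))
  strat_nonempty : ∀ u, (strat u).Nonempty
  strat_valid : ∀ u, ∀ s ∈ strat u, s.Nonempty
  /-- the weight of each player -/
  w : Fin N → ℝ
  /-- `a e k` is the coefficient of `x^k` in the latency function of resource `e` -/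
  a : Fin E → ℕ → ℝ
  hd : 1 ≤ d
  hW : 1 ≤ W
  hw_lower : ∀ u, 1 ≤ w u
  hw_upper : ∀ u, w u ≤ W
  ha_nonneg : ∀ e k, 0 ≤ a e k
  ha_pos : ∀ e, 0 < ∑ k ∈ Finset.range (d + 1), a e k
  hA_pos : 0 < A
  hA_bound : ∀ e e' k k', k ≤ d → k' ≤ d → 0 < a e k → a e' k' ≤ A * a e k

namespace WCGame

/-- A (pure strategy) profile: a choice of a set of resources for every player. -/
abbrev Profile (N E : ℕ) := Fin N → Finset (Fin E)

variable {N E d : ℕ} {W A : ℝ}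

/-- A profile is feasible if every player uses one of her strategies. -/
def IsProfile (G : WCGame N E d W A) (S : Profile N E) : Prop :=
  ∀ u, S u ∈ G.strat u

/-- `U_e(S)`: the multiset of weights of the players using resource `e` in profile `S`. -/
noncomputable def load (G : WCGame N E d W A) (S : Profile N E) (e : Fin E) : Multiset ℝ :=
  (Finset.univ.filter (fun u => e ∈ S u)).val.map G.w

/-- The cost `c_u(S) = w_u · ∑_{e ∈ s_u} ∑_{k=0}^d a_{e,k} · L(U_e(S))^k` of player `u`
in the original game `Γ`. -/
noncomputable def cost (G : WCGame N E d W A) (S : Profile N E) (u : Fin N) : ℝ :=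
  G.w u * ∑ e ∈ S u, ∑ k ∈ Finset.range (d + 1), G.a e k * (G.load S e).sum ^ k

/-- The cost `ĉ_u(S) = w_u · ∑_{e ∈ s_u} ∑_{k=0}^d a_{e,k} · Ψ̂_k(U_e(S))` of player `u`
in the `Ψ̂`-game `Γ̂`. -/
noncomputable def hcost (G : WCGame N E d W A) (S : Profile N E) (u : Fin N) : ℝ :=
  G.w u * ∑ e ∈ S u, ∑ k ∈ Finset.range (d + 1), G.a e k * psiHat k (G.load S e)

/-- The potential function `Φ̂(S) = ∑_e ∑_{k=0}^d (a_{e,k}/(k+1)) · Ψ̂_{k+1}(U_e(S))`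
of the `Ψ̂`-game. -/
noncomputable def potHat (G : WCGame N E d W A) (S : Profile N E) : ℝ :=
  ∑ e : Fin E, ∑ k ∈ Finset.range (d + 1),
    G.a e k / ((k : ℝ) + 1) * psiHat (k + 1) (G.load S e)

/-- The approximate potential function `Φ(S) = ∑_e Ψ_e(L(U_e(S)))` with
`Ψ_e(x) = a_{e,0}·x + ∑_{k=1}^d a_{e,k}·(x^{k+1}/(k+1) + x^k/2)`. -/
noncomputable def pot (G : WCGame N E d W A) (S : Profile N E) : ℝ :=
  ∑ e : Fin E,
    (G.a e 0 * (G.load S e).sum +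
      ∑ k ∈ Finset.Icc 1 d,
        G.a e k * ((G.load S e).sum ^ (k + 1) / ((k : ℝ) + 1) + (G.load S e).sum ^ k / 2))

/-- `S` is a `ρ`-approximate pure Nash equilibrium w.r.t. the player costs `costFn`:
no player can decrease her cost by more than a factor `ρ` by a unilateral deviation. -/
def IsApproxPNE (G : WCGame N E d W A) (costFn : Profile N E → Fin N → ℝ) (ρ : ℝ)
    (S : Profile N E) : Prop :=
  ∀ u, ∀ s' ∈ G.strat u, costFn S u ≤ ρ * costFn (Function.update S u s') u

/-- `sstar u` is a best response of player `u` to `S₋ᵤ` w.r.t. the costs `costFn`. -/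
def IsBestResponses (G : WCGame N E d W A) (costFn : Profile N E → Fin N → ℝ)
    (S : Profile N E) (sstar : Fin N → Finset (Fin E)) : Prop :=
  ∀ u, sstar u ∈ G.strat u ∧
    ∀ s ∈ G.strat u, costFn (Function.update S u (sstar u)) u ≤ costFn (Function.update S u s) u

/-- One step of Algorithm 1 (the `1/(1-ε)` best response dynamic on the `Ψ̂`-game),
moving from profile `S` to profile `S'` by letting the chosen player `ut` (a player with a
`1/(1-ε)`-move of maximum cost reduction) switch to her best response `sstar ut`. -/
def AlgOneStep (G : WCGame N E d W A) (ε : ℝ) (S S' : Profile N E) (ut : Fin N)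
    (sstar : Fin N → Finset (Fin E)) : Prop :=
  G.IsBestResponses G.hcost S sstar ∧
  G.hcost S ut > (1 / (1 - ε)) * G.hcost (Function.update S ut (sstar ut)) ut ∧
  (∀ u, G.hcost S u > (1 / (1 - ε)) * G.hcost (Function.update S u (sstar u)) u →
    G.hcost S ut - G.hcost (Function.update S ut (sstar ut)) ut ≥
      G.hcost S u - G.hcost (Function.update S u (sstar u)) u) ∧
  S' = Function.update S ut (sstar ut)

/-- One step of Algorithm 2 (the refined `ρ/(1-ε)` best response dynamic on `Γ`),
moving from profile `S` to profile `S'` by letting the chosen player `ut` (a player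
maximizing `c_u(S) - ρ·c_u(s_u^*, S₋ᵤ)` among players with `ρ/(1-ε)`-moves) switch to
her best response `sstar ut`. -/
def AlgTwoStep (G : WCGame N E d W A) (ρ ε : ℝ) (S S' : Profile N E) (ut : Fin N)
    (sstar : Fin N → Finset (Fin E)) : Prop :=
  G.IsBestResponses G.cost S sstar ∧
  G.cost S ut > (ρ / (1 - ε)) * G.cost (Function.update S ut (sstar ut)) ut ∧
  (∀ u, G.cost S u > (ρ / (1 - ε)) * G.cost (Function.update S u (sstar u)) u →
    G.cost S ut - ρ * G.cost (Function.update S ut (sstar ut)) ut ≥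
      G.cost S u - ρ * G.cost (Function.update S u (sstar u)) u) ∧
  S' = Function.update S ut (sstar ut)

/-- `c_max`: the maximum cost of a player over all (feasible) profiles in `Γ`. -/
noncomputable def cMax (G : WCGame N E d W A) : ℝ :=
  sSup {x | ∃ S u, G.IsProfile S ∧ x = G.cost S u}

/-- `ĉ_max`: the maximum cost of a player over all (feasible) profiles in `Γ̂`. -/
noncomputable def hcMax (G : WCGame N E d W A) : ℝ :=
  sSup {x | ∃ S u, G.IsProfile S ∧ x = G.hcost S u}

/-- `Φ̂_min`: the minimum of the potential `Φ̂` over all (feasible) profiles. -/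
noncomputable def potHatMin (G : WCGame N E d W A) : ℝ :=
  sInf {x | ∃ S, G.IsProfile S ∧ x = G.potHat S}

/-- `a_min⁺`: the minimum positive coefficient of the latency functions. -/
noncomputable def aMinPos (G : WCGame N E d W A) : ℝ :=
  sInf {x | 0 < x ∧ ∃ e k, k ≤ d ∧ x = G.a e k}

end WCGame

namespace WCGame

variable {N E d : ℕ} {W A : ℝ}

/-- resource latency in the `Ψ̂`-game as a function of the load multiset -/
noncomputable def cE (G : WCGame N E d W A) (e : Fin E) (M : Multiset ℝ) : ℝ :=
  ∑ k ∈ Finset.range (d + 1), G.a e k * psiHat k M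

/-- resource potential in the `Ψ̂`-game as a function of the load multiset -/
noncomputable def phiE (G : WCGame N E d W A) (e : Fin E) (M : Multiset ℝ) : ℝ :=
  ∑ k ∈ Finset.range (d + 1), G.a e k / ((k : ℝ) + 1) * psiHat (k + 1) M

lemma hcost_eq (G : WCGame N E d W A) (S : Profile N E) (u : Fin N) :
    G.hcost S u = G.w u * ∑ e ∈ S u, G.cE e (G.load S e) := rfl

lemma potHat_eq (G : WCGame N E d W A) (S : Profile N E) :
    G.potHat S = ∑ e : Fin E, G.phiE e (G.load S e) := rfl

lemma map_filter_split (w : Fin N → ℝ) (p : Fin N → Prop) [DecidablePred p] (u : Fin N) :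
    (Finset.univ.filter p).val.map w =
      if p u then w u ::ₘ (Finset.univ.filter (fun v => v ≠ u ∧ p v)).val.map w
      else (Finset.univ.filter (fun v => v ≠ u ∧ p v)).val.map w := by
  by_cases hp : p u
  · simp only [hp, if_true]
    have h1 : Finset.univ.filter p = insert u (Finset.univ.filter (fun v => v ≠ u ∧ p v)) := by
      ext v
      by_cases hv : v = u <;> simp [hv, hp]
    rw [h1, Finset.insert_val_of_notMem (by simp), Multiset.map_cons]
  · simp only [hp, if_false]
    congr 1
    congr 1
    apply Finset.filter_congr
    intro v _
    constructor
    · intro hpv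
      refine ⟨?_, hpv⟩
      rintro rfl; exact hp hpv
    · exact fun h => h.2

/-- the load on `e` from all players other than `u` -/
noncomputable def loadErase (G : WCGame N E d W A) (S : Profile N E) (u : Fin N)
    (e : Fin E) : Multiset ℝ :=
  (Finset.univ.filter (fun v => v ≠ u ∧ e ∈ S v)).val.map G.w

/-- the load on `e` from all players other than `u` and `ut` -/
noncomputable def loadErase2 (G : WCGame N E d W A) (S : Profile N E) (u ut : Fin N)
    (e : Fin E) : Multiset ℝ :=
  (Finset.univ.filter (fun v => v ≠ ut ∧ v ≠ u ∧ e ∈ S v)).val.map G.w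

lemma load_split (G : WCGame N E d W A) (S : Profile N E) (u : Fin N) (e : Fin E) :
    G.load S e = if e ∈ S u then G.w u ::ₘ G.loadErase S u e else G.loadErase S u e :=
  map_filter_split G.w (fun v => e ∈ S v) u

lemma loadErase2_comm (G : WCGame N E d W A) (S : Profile N E) (u ut : Fin N) (e : Fin E) :
    G.loadErase2 S u ut e = G.loadErase2 S ut u e := by
  unfold loadErase2
  congr 1
  congr 1
  apply Finset.filter_congr
  intro v _
  tauto

lemma loadErase_split (G : WCGame N E d W A) (S : Profile N E) {u ut : Fin N} (e : Fin E)
    (hne : ut ≠ u) :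
    G.loadErase S u e =
      if e ∈ S ut then G.w ut ::ₘ G.loadErase2 S u ut e else G.loadErase2 S u ut e := by
  have := map_filter_split G.w (fun v => v ≠ u ∧ e ∈ S v) ut
  unfold loadErase loadErase2
  rw [this]
  by_cases h : e ∈ S ut <;> simp [h, hne]

lemma loadErase_update (G : WCGame N E d W A) (S : Profile N E) (u : Fin N)
    (s' : Finset (Fin E)) (e : Fin E) :
    G.loadErase (Function.update S u s') u e = G.loadErase S u e := by
  unfold loadErase
  congr 1
  congr 1
  apply Finset.filter_congr
  intro v _
  by_cases hv : v = u <;> simp [hv, Function.update_of_ne]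

lemma load_update (G : WCGame N E d W A) (S : Profile N E) (u : Fin N)
    (s' : Finset (Fin E)) (e : Fin E) :
    G.load (Function.update S u s') e =
      if e ∈ s' then G.w u ::ₘ G.loadErase S u e else G.loadErase S u e := by
  rw [load_split G (Function.update S u s') u e, Function.update_self,
    loadErase_update]

lemma nonneg_map (G : WCGame N E d W A) (t : Finset (Fin N)) :
    ∀ x ∈ t.val.map G.w, 0 ≤ x := by
  intro x hx
  obtain ⟨v, _, rfl⟩ := Multiset.mem_map.1 hx
  linarith [G.hw_lower v]

lemma load_nonneg (G : WCGame N E d W A) (S : Profile N E) (e : Fin E) :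
    ∀ x ∈ G.load S e, 0 ≤ x := nonneg_map G _

lemma loadErase_nonneg (G : WCGame N E d W A) (S : Profile N E) (u : Fin N) (e : Fin E) :
    ∀ x ∈ G.loadErase S u e, 0 ≤ x := nonneg_map G _

lemma loadErase2_nonneg (G : WCGame N E d W A) (S : Profile N E) (u ut : Fin N) (e : Fin E) :
    ∀ x ∈ G.loadErase2 S u ut e, 0 ≤ x := nonneg_map G _

lemma cE_nonneg (G : WCGame N E d W A) (e : Fin E) {M : Multiset ℝ}
    (hM : ∀ x ∈ M, 0 ≤ x) : 0 ≤ G.cE e M := by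
  apply Finset.sum_nonneg
  intro k _
  exact mul_nonneg (G.ha_nonneg e k) (psiHat_nonneg k hM)

lemma hcost_nonneg (G : WCGame N E d W A) (S : Profile N E) (u : Fin N) :
    0 ≤ G.hcost S u := by
  rw [hcost_eq]
  apply mul_nonneg (by linarith [G.hw_lower u])
  apply Finset.sum_nonneg
  intro e _
  exact cE_nonneg G e (load_nonneg G S e)

lemma phiE_cons (G : WCGame N E d W A) (e : Fin E) (a : ℝ) (M : Multiset ℝ) :
    G.phiE e (a ::ₘ M) - G.phiE e M = a * G.cE e (a ::ₘ M) := by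
  unfold phiE cE
  rw [← Finset.sum_sub_distrib, Finset.mul_sum]
  apply Finset.sum_congr rfl
  intro k _
  have hk : ((k : ℝ) + 1) ≠ 0 := by positivity
  rw [psiHat_cons_rec k a M]
  field_simp
  ring

lemma pot_diff (G : WCGame N E d W A) (S : Profile N E) (u : Fin N) (s' : Finset (Fin E)) :
    G.potHat S - G.potHat (Function.update S u s') =
      G.hcost S u - G.hcost (Function.update S u s') u := by
  set S' := Function.update S u s' with hS'
  have key : ∀ e, G.phiE e (G.load S e) - G.phiE e (G.load S' e)
      = G.w u * ((if e ∈ S u then G.cE e (G.load S e) else 0)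
          - (if e ∈ s' then G.cE e (G.load S' e) else 0)) := by
    intro e
    have hl : G.load S e = if e ∈ S u then G.w u ::ₘ G.loadErase S u e else G.loadErase S u e :=
      load_split G S u e
    have hl' : G.load S' e =
        if e ∈ s' then G.w u ::ₘ G.loadErase S u e else G.loadErase S u e :=
      load_update G S u s' e
    by_cases h1 : e ∈ S u <;> by_cases h2 : e ∈ s' <;>
      simp only [h1, h2, if_true, if_false] at hl hl' ⊢ <;> rw [hl, hl']
    · ring
    · rw [sub_zero, phiE_cons]
    · rw [zero_sub]
      have := phiE_cons G e (G.w u) (G.loadErase S u e)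
      linarith
    · ring
  rw [potHat_eq, potHat_eq, ← Finset.sum_sub_distrib]
  rw [Finset.sum_congr rfl (fun e _ => key e), ← Finset.mul_sum]
  rw [hcost_eq, hcost_eq, ← mul_sub]
  congr 1
  rw [Finset.sum_sub_distrib]
  congr 1
  · rw [Finset.sum_ite_mem, Finset.univ_inter]
  · rw [Finset.sum_ite_mem, Finset.univ_inter]
    apply Finset.sum_congr
    · rw [hS', Function.update_self]
    · intro e _; rfl

lemma load_sum_eq (G : WCGame N E d W A) (S : Profile N E) (e : Fin E) :
    (G.load S e).sum = ∑ u : Fin N, (if e ∈ S u then G.w u else 0) := by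
  unfold load
  rw [← Finset.sum_filter]
  rfl

lemma potHat_le_sum_hcost (G : WCGame N E d W A) (S : Profile N E) :
    G.potHat S ≤ ∑ u : Fin N, G.hcost S u := by
  rw [potHat_eq]
  have step1 : ∀ e, G.phiE e (G.load S e) ≤ (G.load S e).sum * G.cE e (G.load S e) := by
    intro e
    unfold phiE cE
    rw [Finset.mul_sum]
    apply Finset.sum_le_sum
    intro k _
    have hk : (0:ℝ) < (k : ℝ) + 1 := by positivity
    have h1 := psiHat_succ_le k (load_nonneg G S e)
    have ha := G.ha_nonneg e k
    have hs : 0 ≤ (G.load S e).sum := Multiset.sum_nonneg (load_nonneg G S e)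
    rw [div_mul_eq_mul_div, div_le_iff₀ hk]
    calc G.a e k * psiHat (k+1) (G.load S e)
        ≤ G.a e k * (((k:ℝ)+1) * (G.load S e).sum * psiHat k (G.load S e)) := by
          exact mul_le_mul_of_nonneg_left h1 ha
      _ = (G.load S e).sum * (G.a e k * psiHat k (G.load S e)) * ((k:ℝ)+1) := by ring
  calc ∑ e : Fin E, G.phiE e (G.load S e)
      ≤ ∑ e : Fin E, (G.load S e).sum * G.cE e (G.load S e) :=
        Finset.sum_le_sum (fun e _ => step1 e)
    _ = ∑ e : Fin E, ∑ u : Fin N, (if e ∈ S u then G.w u else 0) * G.cE e (G.load S e) := by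
        apply Finset.sum_congr rfl
        intro e _
        rw [load_sum_eq, Finset.sum_mul]
    _ = ∑ u : Fin N, ∑ e : Fin E, (if e ∈ S u then G.w u else 0) * G.cE e (G.load S e) :=
        Finset.sum_comm
    _ = ∑ u : Fin N, G.hcost S u := by
        apply Finset.sum_congr rfl
        intro u _
        rw [hcost_eq, Finset.mul_sum]
        rw [show (∑ e : Fin E, (if e ∈ S u then G.w u else 0) * G.cE e (G.load S e))
            = ∑ e : Fin E, (if e ∈ S u then G.w u * G.cE e (G.load S e) else 0) from
          Finset.sum_congr rfl (fun e _ => by by_cases h : e ∈ S u <;> simp [h])]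
        rw [Finset.sum_ite_mem, Finset.univ_inter]

lemma deviation_compare (G : WCGame N E d W A) (S : Profile N E) {u ut : Fin N}
    (hne : u ≠ ut) (σ : Finset (Fin E)) :
    G.hcost (Function.update S u σ) u ≤
      (W + (Nat.factorial d : ℝ) * W ^ (d + 1)) * G.hcost (Function.update S ut σ) ut := by
  have hW := G.hW
  have hwu1 := G.hw_lower u
  have hwuW := G.hw_upper u
  have hwt1 := G.hw_lower ut
  have hwtW := G.hw_upper ut
  set κ : ℝ := 1 + (Nat.factorial d : ℝ) * W ^ d with hκ
  have hκ0 : 0 ≤ κ := by positivity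
  -- per-resource comparison for e ∈ σ
  have key : ∀ e ∈ σ, G.cE e (G.load (Function.update S u σ) e) ≤
      κ * G.cE e (G.load (Function.update S ut σ) e) := by
    intro e he
    have hLu : G.load (Function.update S u σ) e = G.w u ::ₘ G.loadErase S u e := by
      rw [load_update, if_pos he]
    have hLt : G.load (Function.update S ut σ) e = G.w ut ::ₘ G.loadErase S ut e := by
      rw [load_update, if_pos he]
    set M2 := G.loadErase2 S u ut e with hM2
    have hM2n := loadErase2_nonneg G S u ut e
    have h1 : G.loadErase S u e ≤ G.w ut ::ₘ M2 := by
      rw [loadErase_split G S e (Ne.symm hne)]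
      by_cases h : e ∈ S ut
      · rw [if_pos h]
      · rw [if_neg h]; exact Multiset.le_cons_self _ _
    have h2 : M2 ≤ G.loadErase S ut e := by
      rw [loadErase_split G S e hne, loadErase2_comm]
      by_cases h : e ∈ S u
      · rw [if_pos h]; exact Multiset.le_cons_self _ _
      · rw [if_neg h]
    unfold cE
    rw [Finset.mul_sum]
    apply Finset.sum_le_sum
    intro k hk
    have hkd : k ≤ d := by
      have := Finset.mem_range.1 hk; omega
    have ha := G.ha_nonneg e k
    have step : psiHat k (G.load (Function.update S u σ) e) ≤
        κ * psiHat k (G.load (Function.update S ut σ) e) := by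
      rw [hLu, hLt]
      have c1 : psiHat k (G.w u ::ₘ G.loadErase S u e) ≤
          psiHat k (G.w u ::ₘ G.w ut ::ₘ M2) := by
        apply psiHat_mono k (Multiset.cons_le_cons _ h1)
        apply nonneg_cons' (by linarith)
        apply nonneg_cons' (by linarith) hM2n
      have c2 : psiHat k (G.w u ::ₘ G.w ut ::ₘ M2) ≤ κ * psiHat k (G.w ut ::ₘ M2) := by
        rw [hκ]
        exact psiHat_two_cons_le W hW d k hkd (by linarith) hwuW hwt1 hM2n
      have c3 : psiHat k (G.w ut ::ₘ M2) ≤ psiHat k (G.w ut ::ₘ G.loadErase S ut e) := by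
        apply psiHat_mono k (Multiset.cons_le_cons _ h2)
        apply nonneg_cons' (by linarith) (loadErase_nonneg G S ut e)
      calc psiHat k (G.w u ::ₘ G.loadErase S u e) ≤ κ * psiHat k (G.w ut ::ₘ M2) :=
            c1.trans c2
        _ ≤ κ * psiHat k (G.w ut ::ₘ G.loadErase S ut e) :=
            mul_le_mul_of_nonneg_left c3 hκ0
    calc G.a e k * psiHat k (G.load (Function.update S u σ) e)
        ≤ G.a e k * (κ * psiHat k (G.load (Function.update S ut σ) e)) :=
          mul_le_mul_of_nonneg_left step ha
      _ = κ * (G.a e k * psiHat k (G.load (Function.update S ut σ) e)) := by ring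
  -- assemble
  rw [hcost_eq, hcost_eq, Function.update_self, Function.update_self]
  set X := ∑ e ∈ σ, G.cE e (G.load (Function.update S u σ) e) with hX
  set Y := ∑ e ∈ σ, G.cE e (G.load (Function.update S ut σ) e) with hY
  have hXY : X ≤ κ * Y := by
    rw [hX, hY, Finset.mul_sum]
    exact Finset.sum_le_sum key
  have hX0 : 0 ≤ X := by
    apply Finset.sum_nonneg
    intro e _
    exact cE_nonneg G e (load_nonneg G _ e)
  have hY0 : 0 ≤ Y := by
    apply Finset.sum_nonneg
    intro e _
    exact cE_nonneg G e (load_nonneg G _ e)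
  have hC : W + (Nat.factorial d : ℝ) * W ^ (d+1) = W * κ := by
    rw [hκ]; ring
  rw [hC]
  calc G.w u * X ≤ W * X := mul_le_mul_of_nonneg_right hwuW hX0
    _ ≤ W * (κ * Y) := mul_le_mul_of_nonneg_left hXY (by linarith)
    _ = W * κ * (1 * Y) := by ring
    _ ≤ W * κ * (G.w ut * Y) := by
        apply mul_le_mul_of_nonneg_left _ (by positivity)
        exact mul_le_mul_of_nonneg_right hwt1 hY0

end WCGame


open WCGame in
/-- Lemma 7: in the symmetric case (`Σ_u = Σ_{u'}` for all players), if `S` is not a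
`1/(1−ε)`-approximate pure Nash equilibrium of `Γ̂` and `S'` is obtained from `S` by an
Algorithm 1 step with chosen player `ut`, then for every player `u`,
`ĉ_{ut}(S) − ĉ_{ut}(S') ≥ (ε/(W + d!·W^{d+1}))·ĉ_u(S)`; consequently
`Φ̂(S) − Φ̂(S') ≥ (ε/(N·(W + d!·W^{d+1})))·Φ̂(S)`. -/
theorem algOne_step_decrement_symmetric {N E d : ℕ} {W A : ℝ}
    (G : WCGame N E d W A) (hsym : ∀ u u' : Fin N, G.strat u = G.strat u')
    (ε : ℝ) (hε0 : 0 < ε) (hε1 : ε < 1)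
    (S S' : Profile N E) (hS : G.IsProfile S)
    (hnot : ¬ G.IsApproxPNE G.hcost (1 / (1 - ε)) S)
    (ut : Fin N) (sstar : Fin N → Finset (Fin E))
    (hstep : G.AlgOneStep ε S S' ut sstar) :
    (∀ u : Fin N, G.hcost S ut - G.hcost S' ut ≥
      ε / (W + (Nat.factorial d : ℝ) * W ^ (d + 1)) * G.hcost S u) ∧
    G.potHat S - G.potHat S' ≥
      ε / ((N : ℝ) * (W + (Nat.factorial d : ℝ) * W ^ (d + 1))) * G.potHat S := by
  obtain ⟨hBR, hut, hmax, hS'⟩ := hstep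
  subst hS'
  have hW := G.hW
  set C : ℝ := W + (Nat.factorial d : ℝ) * W ^ (d + 1) with hC
  have hfac : (0:ℝ) ≤ (Nat.factorial d : ℝ) * W ^ (d + 1) := by positivity
  have hC1 : 1 ≤ C := by rw [hC]; linarith
  have hC0 : (0:ℝ) < C := by linarith
  have h1ε : (0:ℝ) < 1 - ε := by linarith
  set X : ℝ := G.hcost (Function.update S ut (sstar ut)) ut with hX
  have hX0 : 0 ≤ X := G.hcost_nonneg _ ut
  have hXlt : X < (1 - ε) * G.hcost S ut := by
    have h2 : (1 - ε) * ((1 / (1 - ε)) * X) = X := by field_simp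
    nlinarith [mul_lt_mul_of_pos_left hut h1ε]
  have key : ∀ u : Fin N, ε / C * G.hcost S u ≤ G.hcost S ut - X := by
    intro u
    have hSu0 : 0 ≤ G.hcost S u := G.hcost_nonneg S u
    rw [div_mul_eq_mul_div, div_le_iff₀ hC0]
    by_cases hu : G.hcost S u > (1 / (1 - ε)) * G.hcost (Function.update S u (sstar u)) u
    · have h5 := hmax u hu
      set Y : ℝ := G.hcost (Function.update S u (sstar u)) u with hY
      have hY0 : 0 ≤ Y := G.hcost_nonneg _ u
      have hYlt : Y < (1 - ε) * G.hcost S u := by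
        have h2 : (1 - ε) * ((1 / (1 - ε)) * Y) = Y := by field_simp
        nlinarith [mul_lt_mul_of_pos_left hu h1ε]
      have hΔpos : ε * G.hcost S u < G.hcost S ut - X := by nlinarith
      have hΔ0 : 0 ≤ G.hcost S ut - X := by nlinarith
      calc ε * G.hcost S u ≤ G.hcost S ut - X := le_of_lt hΔpos
        _ = (G.hcost S ut - X) * 1 := by ring
        _ ≤ (G.hcost S ut - X) * C := mul_le_mul_of_nonneg_left hC1 hΔ0
    · -- u is not an improving player
      have hune : u ≠ ut := by
        rintro rfl
        exact hu hut
      have hu' : G.hcost S u ≤ (1 / (1 - ε)) * G.hcost (Function.update S u (sstar u)) u :=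
        le_of_not_gt hu
      have hmemσ : sstar ut ∈ G.strat u := by
        rw [hsym u ut]; exact (hBR ut).1
      have hBRu : G.hcost (Function.update S u (sstar u)) u ≤
          G.hcost (Function.update S u (sstar ut)) u := (hBR u).2 (sstar ut) hmemσ
      have hcomp : G.hcost (Function.update S u (sstar ut)) u ≤ C * X := by
        rw [hC, hX]
        exact G.deviation_compare S hune (sstar ut)
      have F1 : (1 - ε) * G.hcost S u ≤ C * X := by
        have e : (1 - ε) * ((1 / (1 - ε)) * G.hcost (Function.update S u (sstar u)) u)
            = G.hcost (Function.update S u (sstar u)) u := by field_simp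
        have h6 := mul_le_mul_of_nonneg_left hu' (le_of_lt h1ε)
        rw [e] at h6
        linarith
      nlinarith [mul_lt_mul_of_pos_left hXlt hC0, mul_le_mul_of_nonneg_left F1 hε0.le,
        mul_pos hε0 h1ε, mul_nonneg hX0 hC0.le]
  constructor
  · intro u
    exact key u
  · have hpd : G.potHat S - G.potHat (Function.update S ut (sstar ut))
        = G.hcost S ut - X := by
      rw [hX]
      exact G.pot_diff S ut (sstar ut)
    have hsum := G.potHat_le_sum_hcost S
    have hN : (0:ℝ) < (N:ℝ) := by exact_mod_cast ut.pos
    have hεC : 0 ≤ ε / C := by positivity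
    have hNΔ : ε / C * G.potHat S ≤ (N:ℝ) * (G.hcost S ut - X) := by
      calc ε / C * G.potHat S ≤ ε / C * ∑ u : Fin N, G.hcost S u :=
            mul_le_mul_of_nonneg_left hsum hεC
        _ = ∑ u : Fin N, ε / C * G.hcost S u := by rw [Finset.mul_sum]
        _ ≤ ∑ _u : Fin N, (G.hcost S ut - X) := Finset.sum_le_sum (fun u _ => key u)
        _ = (N:ℝ) * (G.hcost S ut - X) := by
            rw [Finset.sum_const, Finset.card_univ, Fintype.card_fin, nsmul_eq_mul]
    rw [ge_iff_le, hpd]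
    have e2 : ε / ((N:ℝ) * C) * G.potHat S = (ε / C * G.potHat S) / (N:ℝ) := by
      rw [mul_comm (N:ℝ) C, ← div_div]
      ring
    rw [e2, div_le_iff₀ hN]
    linarith [hNΔ]
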